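/- The cubic-in-time functional K(s) = (1/2) u(s)ᵀ N(ρ(s)) u(s), with u, ρ linear in s and N linear, satisfies K(1) - K(0) = [(1/3)N(ρⁿ)uⁿ + (1/6)N(ρⁿ)uᵏ + (1/6)N(ρᵏ)uⁿ + (1/3)N(ρᵏ)uᵏ] · (uᵏ - uⁿ) + [(1/3)Φⁿⁿ + (1/3)Φᵏⁿ + (1/3)Φᵏᵏ] with Φ-terms (1/2)uᵀN'u evaluated at the appropriate endpoint combinations dotted with (ρᵏ - ρⁿ), i.e., the exact change in K decomposes into the weighted discrete variational derivatives in u and in ρ given by the weights (1/3,1/6,1/6,1/3) and (1/3,1/3,1/3) respectively. -/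
import Mathlib


open Matrix

/-- The exact change of the cubic-in-time functional `K(s) = (1/2)u(s)ᵀN(ρ(s))u(s)`
decomposes into the weighted discrete variational derivatives in `u` (weights
1/3, 1/6, 1/6, 1/3) and in `ρ` (weights 1/3, 1/3, 1/3). -/
theorem stmt_14 {m n : ℕ}
    (N : (Fin m → ℝ) →ₗ[ℝ] Matrix (Fin n) (Fin n) ℝ)
    (hsym : ∀ ρ : Fin m → ℝ, (N ρ)ᵀ = N ρ)
    (un uk : Fin n → ℝ) (ρn ρk : Fin m → ℝ)
    (u : ℝ → Fin n → ℝ) (ρ : ℝ → Fin m → ℝ)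
    (hu : ∀ s : ℝ, u s = (1 - s) • un + s • uk)
    (hρ : ∀ s : ℝ, ρ s = (1 - s) • ρn + s • ρk)
    (K : ℝ → ℝ) (hK : ∀ s : ℝ, K s = (1/2 : ℝ) * (u s ⬝ᵥ (N (ρ s)) *ᵥ u s))
    (T : (Fin n → ℝ) → (Fin n → ℝ) → (Fin m → ℝ))
    (hT : ∀ σ τ δρ, T σ τ ⬝ᵥ δρ = (1/2 : ℝ) * (σ ⬝ᵥ (N δρ) *ᵥ τ)) :
    K 1 - K 0 =
      ((1/3 : ℝ) • ((N ρn) *ᵥ un) + (1/6 : ℝ) • ((N ρn) *ᵥ uk) +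
        (1/6 : ℝ) • ((N ρk) *ᵥ un) + (1/3 : ℝ) • ((N ρk) *ᵥ uk)) ⬝ᵥ (uk - un) +
      ((1/3 : ℝ) • T un un + (1/3 : ℝ) • T uk un + (1/3 : ℝ) • T uk uk) ⬝ᵥ (ρk - ρn) := by
  have hswap : ∀ (ρ0 : Fin m → ℝ) (v w : Fin n → ℝ),
      v ⬝ᵥ (N ρ0) *ᵥ w = w ⬝ᵥ (N ρ0) *ᵥ v := by
    intro ρ0 v w
    rw [dotProduct_comm, dotProduct_mulVec, ← mulVec_transpose, hsym]
  have hu1 : u 1 = uk := by rw [hu]; simp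
  have hu0 : u 0 = un := by rw [hu]; simp
  have hρ1 : ρ 1 = ρk := by rw [hρ]; simp
  have hρ0 : ρ 0 = ρn := by rw [hρ]; simp
  have hNd : N (ρk - ρn) = N ρk - N ρn := map_sub N ρk ρn
  rw [hK 1, hK 0, hu1, hu0, hρ1, hρ0]
  simp only [add_dotProduct, smul_dotProduct, hT, hNd, sub_mulVec,
    dotProduct_sub, smul_eq_mul]
  have e1 : ((N ρn) *ᵥ un) ⬝ᵥ uk = un ⬝ᵥ (N ρn) *ᵥ uk := by
    rw [dotProduct_comm, hswap]
  have e2 : ((N ρn) *ᵥ un) ⬝ᵥ un = un ⬝ᵥ (N ρn) *ᵥ un := dotProduct_comm _ _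
  have e3 : ((N ρn) *ᵥ uk) ⬝ᵥ uk = uk ⬝ᵥ (N ρn) *ᵥ uk := dotProduct_comm _ _
  have e4 : ((N ρn) *ᵥ uk) ⬝ᵥ un = un ⬝ᵥ (N ρn) *ᵥ uk := by
    rw [dotProduct_comm, hswap]
  have e5 : ((N ρk) *ᵥ un) ⬝ᵥ uk = un ⬝ᵥ (N ρk) *ᵥ uk := by
    rw [dotProduct_comm, hswap]
  have e6 : ((N ρk) *ᵥ un) ⬝ᵥ un = un ⬝ᵥ (N ρk) *ᵥ un := dotProduct_comm _ _
  have e7 : ((N ρk) *ᵥ uk) ⬝ᵥ uk = uk ⬝ᵥ (N ρk) *ᵥ uk := dotProduct_comm _ _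
  have e8 : ((N ρk) *ᵥ uk) ⬝ᵥ un = un ⬝ᵥ (N ρk) *ᵥ uk := by
    rw [dotProduct_comm, hswap]
  have e9 : uk ⬝ᵥ (N ρk) *ᵥ un = un ⬝ᵥ (N ρk) *ᵥ uk := hswap _ _ _
  have e10 : uk ⬝ᵥ (N ρn) *ᵥ un = un ⬝ᵥ (N ρn) *ᵥ uk := hswap _ _ _
  rw [e1, e2, e3, e4, e5, e6, e7, e8, e9, e10]
  ring
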